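/- Let 0 < D_m < D_n and N > 0, and suppose P satisfies e^(N/D_n)·(e^(N/D_m) - 1) ≤ P ≤ e^(N/(D_n-D_m)) - 1. Then -D_m·P + D_n·e^(N/D_n)·(1+P)^(D_m/D_n) ≥ D_n·e^(N/D_n). -/

import Mathlib

theorem stmt_10 (Dm Dn N P : ℝ) (hDm : 0 < Dm) (hDmn : Dm < Dn) (hN : 0 < N)
    (hP1 : Real.exp (N / Dn) * (Real.exp (N / Dm) - 1) ≤ P)
    (hP2 : P ≤ Real.exp (N / (Dn - Dm)) - 1) :
    Dn * Real.exp (N / Dn)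
      ≤ -Dm * P + Dn * Real.exp (N / Dn) * (1 + P) ^ (Dm / Dn) := by
  have hDn : 0 < Dn := hDm.trans hDmn
  have hd : 0 < Dn - Dm := sub_pos.mpr hDmn
  set a := Dm / Dn with ha_def
  have ha0 : 0 < a := div_pos hDm hDn
  have ha1 : a < 1 := (div_lt_one hDn).mpr hDmn
  set t := N / (Dn - Dm) with ht_def
  have ht : 0 < t := div_pos hN hd
  have hNDn : N / Dn = (1 - a) * t := by
    rw [ha_def, ht_def]; field_simp
  set C := Real.exp (N / Dn) with hC_def
  have hC : 0 < C := Real.exp_pos _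
  set Q := Real.exp t - 1 with hQ_def
  have hQ : 0 < Q := by
    have := Real.add_one_lt_exp (ne_of_gt ht)
    simp only [hQ_def]; linarith
  have hP0 : 0 < P := by
    have h1 : N / Dm + 1 < Real.exp (N / Dm) :=
      Real.add_one_lt_exp (ne_of_gt (div_pos hN hDm))
    have h2 : 0 < N / Dm := div_pos hN hDm
    nlinarith
  have hPQ : P ≤ Q := hP2
  have hQne : Q ≠ 0 := ne_of_gt hQ
  -- concavity of rpow
  have hconc : (1 - P / Q) * 1 + (P / Q) * (1 + Q) ^ a ≤ (1 + P) ^ a := by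
    have hmem1 : (1:ℝ) ∈ Set.Ici (0:ℝ) := Set.mem_Ici.mpr zero_le_one
    have hmem2 : (1 + Q) ∈ Set.Ici (0:ℝ) := Set.mem_Ici.mpr (by linarith)
    have hw1 : (0:ℝ) ≤ 1 - P / Q := by
      have : P / Q ≤ 1 := (div_le_one hQ).mpr hPQ
      linarith
    have hw2 : (0:ℝ) ≤ P / Q := by positivity
    have hws : (1 - P / Q) + P / Q = 1 := by ring
    have h := (Real.concaveOn_rpow ha0.le ha1.le).2 hmem1 hmem2 hw1 hw2 hws
    have hx : (1 - P / Q) • (1:ℝ) + (P / Q) • (1 + Q) = 1 + P := by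
      field_simp; rw [smul_eq_mul, smul_eq_mul, div_mul_eq_mul_div, div_mul_eq_mul_div, ← add_div, div_eq_iff hQne]; ring
    rw [hx] at h
    simpa [Real.one_rpow, smul_eq_mul] using h
  have hQa : (1 + Q) ^ a = Real.exp (t * a) := by
    rw [hQ_def]
    rw [show (1 : ℝ) + (Real.exp t - 1) = Real.exp t by ring, ← Real.exp_mul]
  -- convexity of exp
  have hkey : Real.exp ((1 - a) * t) ≤ (1 - a) * Real.exp t + a := by
    have hw1 : (0:ℝ) ≤ 1 - a := by linarith
    have hws : (1 - a) + a = 1 := by ring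
    have h := convexOn_exp.2 (Set.mem_univ t) (Set.mem_univ (0:ℝ)) hw1 ha0.le hws
    simpa [smul_eq_mul] using h
  have hC2 : a * Q ≤ C * (Real.exp (t * a) - 1) := by
    have hsplit : C * Real.exp (t * a) = Real.exp t := by
      rw [hC_def, hNDn, ← Real.exp_add]; ring_nf
    have hCval : C = Real.exp ((1 - a) * t) := by rw [hC_def, hNDn]
    rw [hQ_def]
    nlinarith [hkey, hsplit, hCval]
  -- assemble
  have hmul : Dn * C + Dm * P ≤ Dn * C * (1 + P) ^ a := by
    have h1 : 1 + (P / Q) * (Real.exp (t * a) - 1) ≤ (1 + P) ^ a := by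
      rw [← hQa]
      calc 1 + (P / Q) * ((1 + Q) ^ a - 1)
          = (1 - P / Q) * 1 + (P / Q) * (1 + Q) ^ a := by ring
        _ ≤ (1 + P) ^ a := hconc
    have h2 : Dm * P ≤ Dn * C * ((P / Q) * (Real.exp (t * a) - 1)) := by
      have h3 : P / Q * (a * Q) ≤ P / Q * (C * (Real.exp (t * a) - 1)) := by
        apply mul_le_mul_of_nonneg_left hC2 (by positivity)
      have h4 : P / Q * (a * Q) = a * P := by field_simp
      have h5 : Dn * a = Dm := by rw [ha_def]; field_simp
      calc Dm * P = Dn * (a * P) := by rw [← h5]; ring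
        _ ≤ Dn * (P / Q * (C * (Real.exp (t * a) - 1))) := by
            apply mul_le_mul_of_nonneg_left _ hDn.le
            rw [← h4]; exact h3
        _ = Dn * C * ((P / Q) * (Real.exp (t * a) - 1)) := by ring
    nlinarith [mul_le_mul_of_nonneg_left h1 (by positivity : (0:ℝ) ≤ Dn * C)]
  linarith
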